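/- arXiv:2106.06785 — 3 statements merged into one kernel-verified Lean document; each statement's English description precedes it below -/
import Mathlib

section
/- Let p be a prime and let A be a commutative ring in which p = 0 (i.e., A has characteristic p). Let a and u be units of A and let c ∈ A be arbitrary. Then the quotient A-algebra A[X]/(C c + C a · X^p − C u · X) (in Lean: AdjoinRoot of the polynomial C c + C a * X ^ p − C u * X) is an étale A-algebra. -/
open Polynomial

private lemma aux_pow_eq {p : ℕ} (hp : p.Prime) {B : Type*} [CommRing B]
    (hB : (p : B) = 0) (b ε : B) (hε : ε ^ 2 = 0) : (b + ε) ^ p = b ^ p := by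
  rw [add_pow]
  rw [Finset.sum_eq_single p]
  · simp
  · intro k hk hkp
    have hk' : k < p := lt_of_le_of_ne (Finset.mem_range_succ_iff.mp hk) hkp
    rcases eq_or_ne k (p - 1) with rfl | hne
    · have : p - (p - 1) = 1 := by omega
      rw [this, pow_one]
      have : (p.choose (p - 1) : B) = 0 := by
        rw [Nat.choose_symm hp.one_lt.le, Nat.choose_one_right]; exact hB
      rw [this, mul_zero]
    · have h2 : 2 ≤ p - k := by omega
      have : ε ^ (p - k) = 0 := by
        calc ε ^ (p - k) = ε ^ 2 * ε ^ (p - k - 2) := by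
              rw [← pow_add]; congr 1; omega
          _ = 0 := by rw [hε, zero_mul]
      rw [this, mul_zero, zero_mul]
  · intro h; exact absurd (Finset.self_mem_range_succ p) h

private lemma aux_aeval {p : ℕ} (hp : p.Prime) {A : Type*} [CommRing A] [CharP A p]
    (a u : Aˣ) (c : A) {B : Type*} [CommRing B] [Algebra A B] (b ε : B) (hε : ε ^ 2 = 0) :
    aeval (b + ε) (C c + C (a : A) * X ^ p - C (u : A) * X)
      = aeval b (C c + C (a : A) * X ^ p - C (u : A) * X) - algebraMap A B u * ε := by
  have hpB : (p : B) = 0 := by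
    rw [show ((p : ℕ) : B) = algebraMap A B ((p : ℕ) : A) from (map_natCast _ p).symm,
      CharP.cast_eq_zero A p, map_zero]
  simp only [map_add, map_sub, map_mul, aeval_C, aeval_X, map_pow,
    aux_pow_eq hp hpB b ε hε]
  ring

theorem stmt_1 (p : ℕ) (hp : p.Prime) (A : Type*) [CommRing A] [CharP A p]
    (a u : Aˣ) (c : A) :
    Algebra.Etale A (AdjoinRoot (C c + C (a : A) * X ^ p - C (u : A) * X)) := by
  set f : A[X] := C c + C (a : A) * X ^ p - C (u : A) * X with hf
  have hroot : ∀ {B : Type _} [CommRing B] [Algebra A B]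
      (φ : AdjoinRoot f →ₐ[A] B), aeval (φ (AdjoinRoot.root f)) f = 0 := by
    intro B _ _ φ
    rw [aeval_algHom_apply, AdjoinRoot.aeval_eq, AdjoinRoot.mk_self, map_zero]
  have hFU : Algebra.FormallyUnramified A (AdjoinRoot f) := by
    rw [Algebra.FormallyUnramified.iff_comp_injective]
    intro B _ _ I hI f₁ f₂ he
    apply AdjoinRoot.algHom_ext
    set ε := f₁ (AdjoinRoot.root f) - f₂ (AdjoinRoot.root f) with hε
    have hεI : ε ∈ I := by
      have := congrArg (fun g => g (AdjoinRoot.root f)) he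
      simpa [Ideal.Quotient.mkₐ_eq_mk, Ideal.Quotient.eq, ε] using
        (Ideal.Quotient.eq.mp (by simpa using this))
    have hε2 : ε ^ 2 = 0 := by
      have : ε ^ 2 ∈ I ^ 2 := by rw [pow_two, pow_two]; exact Ideal.mul_mem_mul hεI hεI
      rw [hI] at this; simpa using this
    have key : (0 : B) = 0 - algebraMap A B u * ε := by
      calc (0 : B) = aeval (f₁ (AdjoinRoot.root f)) f := (hroot f₁).symm
        _ = aeval (f₂ (AdjoinRoot.root f) + ε) f := by rw [hε]; ring_nf
        _ = aeval (f₂ (AdjoinRoot.root f)) f - algebraMap A B u * ε :=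
            aux_aeval hp a u c _ ε hε2
        _ = 0 - algebraMap A B u * ε := by rw [hroot f₂]
    have h0 : algebraMap A B (u : A) * ε = 0 := by linear_combination key
    have hu : IsUnit (algebraMap A B (u : A)) := (u.map (algebraMap A B).toMonoidHom).isUnit
    have hε0 : ε = 0 := (hu.mul_right_eq_zero).mp h0
    exact sub_eq_zero.mp (hε ▸ hε0)
  have hFS : Algebra.FormallySmooth A (AdjoinRoot f) := by
    apply Algebra.FormallySmooth.of_comp_surjective
    intro B _ _ I hI g
    obtain ⟨b, hb⟩ := Ideal.Quotient.mk_surjective (g (AdjoinRoot.root f))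
    set ε : B := algebraMap A B ((u⁻¹ : Aˣ) : A) * aeval b f with hεdef
    have hbI : aeval b f ∈ I := by
      rw [← Ideal.Quotient.eq_zero_iff_mem]
      have h1 : aeval ((Ideal.Quotient.mkₐ A I) b) f = (Ideal.Quotient.mkₐ A I) (aeval b f) :=
        aeval_algHom_apply _ b f
      have : Ideal.Quotient.mk I (aeval b f) = aeval (g (AdjoinRoot.root f)) f := by
        rw [← hb]; exact h1.symm
      rw [this, hroot g]
    have hεI : ε ∈ I := Ideal.mul_mem_left I _ hbI
    have hε2 : ε ^ 2 = 0 := by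
      have : ε ^ 2 ∈ I ^ 2 := by rw [pow_two, pow_two]; exact Ideal.mul_mem_mul hεI hεI
      rw [hI] at this; simpa using this
    have hzero : aeval (b + ε) f = 0 := by
      rw [aux_aeval hp a u c b ε hε2, hεdef, ← mul_assoc, ← map_mul,
        Units.mul_inv, map_one, one_mul, sub_self]
    refine ⟨AdjoinRoot.liftAlgHom f (Algebra.ofId A B) (b + ε)
      (show eval₂ (Algebra.ofId A B : A →+* B) (b + ε) f = 0 from hzero), ?_⟩
    apply AdjoinRoot.algHom_ext
    simp only [AlgHom.coe_comp, Function.comp_apply, AdjoinRoot.liftAlgHom_root]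
    rw [Ideal.Quotient.mkₐ_eq_mk, map_add, ← hb,
      Ideal.Quotient.eq_zero_iff_mem.mpr hεI, add_zero]
  have hFP : Algebra.FinitePresentation A (AdjoinRoot f) :=
    Algebra.FinitePresentation.quotient (Submodule.fg_span_singleton f)
  haveI := hFU; haveI := hFS
  exact ⟨Algebra.FormallyEtale.of_formallyUnramified_and_formallySmooth, hFP⟩
end

section
/- Let p be a prime and let A be a commutative ring in which p = 0 (i.e., A has characteristic p). Let a and u be units of A and let c ∈ A be arbitrary. Then the quotient A-algebra A[X]/(C c + C a · X^{p²} − C u · X) (in Lean: AdjoinRoot of the polynomial C c + C a * X ^ (p^2) − C u * X) is an étale A-algebra. -/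
open Polynomial

private lemma deriv_aux {p : ℕ} (A : Type*) [CommRing A] [CharP A p]
    (a u c : A) :
    derivative (C c + C a * X ^ (p ^ 2) - C u * X) = - C u := by
  have hp : ((p ^ 2 : ℕ) : A) = 0 := by
    rw [Nat.cast_pow, CharP.cast_eq_zero, zero_pow (by norm_num)]
  simp [derivative_X_pow, hp]

private lemma aeval_deriv {p : ℕ} {A : Type*} [CommRing A] [CharP A p]
    (a u c : A) {B : Type*} [CommRing B] [Algebra A B] (x : B) :
    aeval x (derivative (C c + C a * X ^ (p ^ 2) - C u * X)) = - algebraMap A B u := by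
  rw [deriv_aux A a u c]; simp

theorem stmt_2 (p : ℕ) (hp : p.Prime) (A : Type*) [CommRing A] [CharP A p]
    (a u : Aˣ) (c : A) :
    Algebra.Etale A (AdjoinRoot (C c + C (a : A) * X ^ (p ^ 2) - C (u : A) * X)) := by
  set f : A[X] := C c + C (a : A) * X ^ (p ^ 2) - C (u : A) * X with hf
  -- Taylor expansion lemma for aeval
  have taylor : ∀ {B : Type _} [CommRing B] [Algebra A B] (x h : B), h ^ 2 = 0 →
      aeval (x + h) f = aeval x f - algebraMap A B u * h := by
    intro B _ _ x h h2
    rw [← eval_map_algebraMap, Polynomial.eval_add_of_sq_eq_zero _ _ _ h2,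
      eval_map_algebraMap, derivative_map, eval_map_algebraMap, aeval_deriv]
    ring
  constructor
  · rw [Algebra.FormallyEtale.iff_comp_bijective]
    intro B _ _ I hI
    constructor
    · -- injectivity
      intro φ ψ hφψ
      have hsub : φ (AdjoinRoot.root f) - ψ (AdjoinRoot.root f) ∈ I := by
        rw [← Ideal.Quotient.eq]
        exact congrArg (fun g => g (AdjoinRoot.root f)) hφψ
      have h2 : (φ (AdjoinRoot.root f) - ψ (AdjoinRoot.root f)) ^ 2 = 0 := by
        have h2' : (φ (AdjoinRoot.root f) - ψ (AdjoinRoot.root f)) ^ 2 ∈ I ^ 2 := by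
          rw [pow_two, pow_two]; exact Ideal.mul_mem_mul hsub hsub
        rwa [hI, Ideal.mem_bot] at h2'
      have hx : aeval (φ (AdjoinRoot.root f)) f = 0 := AdjoinRoot.aeval_algHom_eq_zero f φ
      have hy : aeval (ψ (AdjoinRoot.root f)) f = 0 := AdjoinRoot.aeval_algHom_eq_zero f ψ
      have key : φ (AdjoinRoot.root f) = ψ (AdjoinRoot.root f) := by
        have := taylor (ψ (AdjoinRoot.root f))
          (φ (AdjoinRoot.root f) - ψ (AdjoinRoot.root f)) h2
        rw [add_sub_cancel, hx, hy, zero_sub] at this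
        have hu : IsUnit (algebraMap A B u) := u.isUnit.map (algebraMap A B)
        have := hu.mul_right_eq_zero.mp (neg_eq_zero.mp this.symm)
        exact sub_eq_zero.mp this
      exact AdjoinRoot.algHom_ext key
    · -- surjectivity
      intro g
      obtain ⟨x, hx⟩ := Ideal.Quotient.mk_surjective (g (AdjoinRoot.root f))
      have hfx : Ideal.Quotient.mk I (aeval x f) = 0 := by
        have : aeval (Ideal.Quotient.mk I x) f = 0 := by
          rw [hx]; exact AdjoinRoot.aeval_algHom_eq_zero f g
        rwa [show ((Ideal.Quotient.mk I) x) = (Ideal.Quotient.mkₐ A I) x from rfl,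
          aeval_algHom_apply] at this
      have hmem : aeval x f ∈ I := Ideal.Quotient.eq_zero_iff_mem.mp hfx
      set h : B := algebraMap A B ((u⁻¹ : Aˣ) : A) * aeval x f with hh
      have hmemh : h ∈ I := Ideal.mul_mem_left I _ hmem
      have h2 : h ^ 2 = 0 := by
        have h2' : h ^ 2 ∈ I ^ 2 := by
          rw [pow_two, pow_two]; exact Ideal.mul_mem_mul hmemh hmemh
        rwa [hI, Ideal.mem_bot] at h2'
      have hroot : aeval (x + h) f = 0 := by
        rw [taylor x h h2, hh, ← mul_assoc, ← map_mul, Units.mul_inv, map_one, one_mul,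
          sub_self]
      refine ⟨AdjoinRoot.liftAlgHom f (Algebra.ofId A B) (x + h)
        (by rw [← hroot, aeval_def]; rfl), ?_⟩
      apply AdjoinRoot.algHom_ext
      rw [AlgHom.comp_apply, AdjoinRoot.liftAlgHom_root, Ideal.Quotient.mkₐ_eq_mk, map_add, hx,
        Ideal.Quotient.eq_zero_iff_mem.mpr hmemh, add_zero]
  · exact AdjoinRoot.finitePresentation f
end

section
/- Fix a prime p. Define d₂ : ℕ → ℤ by d₂(n) = 2pⁿ − 1 for n ∈ {1, 2, 3} and d₂(n) = 2p³·(p^{n−3} − p^{n−4}) + d₂(n−3) for n ≥ 4, and for n ≥ 1, writing n = 3q + j with j ∈ {1, 2, 3}, define r₂(n) = ∑_{k=0}^{q} p^{n−3k} (so r₂(n) = pⁿ + p^{n−3} + ⋯ + p^j). Then for every n ≥ 1 one has 2·p^{n+2} − d₂(n) − 1 = (2p² − 2)·r₂(n). -/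
theorem stmt_7 (p : ℕ) (hp : p.Prime) (d₂ : ℕ → ℤ)
    (hbase : ∀ n : ℕ, n = 1 ∨ n = 2 ∨ n = 3 → d₂ n = 2 * (p : ℤ) ^ n - 1)
    (hrec : ∀ n : ℕ, 4 ≤ n →
      d₂ n = 2 * (p : ℤ) ^ 3 * ((p : ℤ) ^ (n - 3) - (p : ℤ) ^ (n - 4)) + d₂ (n - 3)) :
    ∀ n : ℕ, 1 ≤ n → ∀ q j : ℕ, 1 ≤ j → j ≤ 3 → n = 3 * q + j →
      2 * (p : ℤ) ^ (n + 2) - d₂ n - 1 =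
        (2 * (p : ℤ) ^ 2 - 2) * ∑ k ∈ Finset.range (q + 1), (p : ℤ) ^ (n - 3 * k) := by
  intro n hn q j hj1 hj3 hnq
  induction q generalizing n j with
  | zero =>
    have hn3 : n = 1 ∨ n = 2 ∨ n = 3 := by omega
    rw [hbase n hn3, Finset.sum_range_one]
    have : n - 3 * 0 = n := by omega
    rw [this, pow_add]
    ring
  | succ q ih =>
    obtain ⟨m', rfl⟩ : ∃ m', n = m' + 4 := ⟨n - 4, by omega⟩
    have hrecn := hrec (m' + 4) (by omega)
    have e1 : m' + 4 - 3 = m' + 1 := by omega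
    have e2 : m' + 4 - 4 = m' := by omega
    rw [e1, e2] at hrecn
    have ihm := ih (m' + 1) (by omega) j hj1 hj3 (by omega)
    have hsum : ∑ k ∈ Finset.range (q + 1 + 1), (p : ℤ) ^ (m' + 4 - 3 * k)
        = (∑ k ∈ Finset.range (q + 1), (p : ℤ) ^ (m' + 1 - 3 * k)) + (p : ℤ) ^ (m' + 4) := by
      rw [Finset.sum_range_succ']
      congr 1
      · exact Finset.sum_congr rfl fun i _ => by congr 1; omega
    rw [hsum, hrecn]
    linear_combination ihm
end
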